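/- arXiv:1508.07217 — 2 statements merged into one kernel-verified Lean document; each statement's English description precedes it below -/
import Mathlib

section
/- An oriented graph S is splitable (isomorphic to R(T) for some oriented graph T) if and only if its vertex set can be partitioned into two parts V1, V2 with a bijection f: V1 → V2 such that for every u in V1, N⁺(u) = N⁻(f(u)) and N⁻(u) = N⁺(f(u)). -/
/-- An oriented graph: a loopless digraph with no 2-cycles (arc relation is asymmetric). -/
structure OGraph (V : Type) where
  arc : V → V → Prop
  asymm : ∀ u v, arc u v → ¬ arc v u

namespace OGraph

/-- Pushing a set `S` of vertices reverses exactly the arcs with exactly one endpoint in `S`. -/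
def push {V : Type} (G : OGraph V) (S : Set V) : OGraph V where
  arc u v := (Xor' (u ∈ S) (v ∈ S) ∧ G.arc v u) ∨ (¬ Xor' (u ∈ S) (v ∈ S) ∧ G.arc u v)
  asymm := by
    intro u v h h'
    have h1 := G.asymm u v
    have h2 := G.asymm v u
    unfold Xor' at h h'
    unfold Xor at h h'
    tauto

/-- Homomorphism of oriented graphs. -/
def IsHom {V W : Type} (G : OGraph V) (H : OGraph W) (f : V → W) : Prop :=
  ∀ u v, G.arc u v → H.arc (f u) (f v)

/-- Isomorphism of oriented graphs along an equivalence. -/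
def IsIso {V W : Type} (G : OGraph V) (H : OGraph W) (e : V ≃ W) : Prop :=
  ∀ u v, G.arc u v ↔ H.arc (e u) (e v)

/-- The anti-twinned graph `R(G)` on two copies of the vertices:
`inl` is the original copy, `inr` the pushed (primed) copy. -/
def antiTwin {V : Type} (G : OGraph V) : OGraph (V ⊕ V) where
  arc x y :=
    match x, y with
    | Sum.inl u, Sum.inl v => G.arc u v
    | Sum.inr u, Sum.inr v => G.arc u v
    | Sum.inl u, Sum.inr v => G.arc v u
    | Sum.inr u, Sum.inl v => G.arc v u
  asymm := by
    rintro (u | u) (v | v) h h' <;> exact G.asymm _ _ h h'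

/-- The anti-twin of a vertex of `R(G)`: `x'` with `x'' = x`. -/
def tw {V : Type} : V ⊕ V → V ⊕ V := Sum.elim Sum.inr Sum.inl

/-- `H` is an orientation of the simple graph `G`. -/
def IsOrientationOf {V : Type} (H : OGraph V) (G : SimpleGraph V) : Prop :=
  (∀ u v, H.arc u v → G.Adj u v) ∧ (∀ u v, G.Adj u v → H.arc u v ∨ H.arc v u)

end OGraph

/-- The directed 3-cycle. -/
def C3 : OGraph (Fin 3) where
  arc u v := v = u + 1
  asymm := by decide

/-- An oriented graph `S` is splitable (isomorphic to `R(T)` for some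
oriented graph `T`) iff its vertices can be partitioned into `V₁, V₂` with a bijection
`f : V₁ → V₂` such that `N⁺(u) = N⁻(f(u))` and `N⁻(u) = N⁺(f(u))` for all `u ∈ V₁`. -/
theorem splitable_iff_antitwin_partition {V : Type} (S : OGraph V) :
    (∃ (W : Type) (T : OGraph W) (e : (W ⊕ W) ≃ V), OGraph.IsIso T.antiTwin S e) ↔
    (∃ (V1 V2 : Set V) (f : V → V),
      V1 ∪ V2 = Set.univ ∧ Disjoint V1 V2 ∧ Set.BijOn f V1 V2 ∧
      ∀ u ∈ V1, ∀ z,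
        (S.arc (f u) z ↔ S.arc z u) ∧ (S.arc z (f u) ↔ S.arc u z)) := by
  constructor
  · rintro ⟨W, T, e, he⟩
    refine ⟨e '' (Set.range Sum.inl), e '' (Set.range Sum.inr),
      fun v => e (OGraph.tw (e.symm v)), ?_, ?_, ?_, ?_⟩
    · ext v
      simp only [Set.mem_union, Set.mem_image, Set.mem_range, Set.mem_univ, iff_true]
      rcases h : e.symm v with w | w
      · exact Or.inl ⟨Sum.inl w, ⟨w, rfl⟩, by rw [← h]; simp⟩
      · exact Or.inr ⟨Sum.inr w, ⟨w, rfl⟩, by rw [← h]; simp⟩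
    · rw [Set.disjoint_left]
      rintro v ⟨x, ⟨w, rfl⟩, rfl⟩ ⟨y, ⟨w', rfl⟩, hy⟩
      exact Sum.inl_ne_inr (e.injective hy).symm
    · refine ⟨?_, ?_, ?_⟩
      · rintro v ⟨x, ⟨w, rfl⟩, rfl⟩
        exact ⟨Sum.inr w, ⟨w, rfl⟩, by simp [OGraph.tw]⟩
      · rintro v ⟨x, ⟨w, rfl⟩, rfl⟩ v' ⟨x', ⟨w', rfl⟩, rfl⟩ h
        simp only [Equiv.symm_apply_apply, OGraph.tw, Sum.elim_inl] at h
        have := e.injective h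
        simp at this
        rw [this]
      · rintro v ⟨x, ⟨w, rfl⟩, rfl⟩
        refine ⟨e (Sum.inl w), ⟨Sum.inl w, ⟨w, rfl⟩, rfl⟩, by simp [OGraph.tw]⟩
    · rintro u ⟨x, ⟨w, rfl⟩, rfl⟩ z
      have hz := e.apply_symm_apply z
      set y := e.symm z with hy
      simp only [Equiv.symm_apply_apply, OGraph.tw, Sum.elim_inl]
      rw [← hz]
      constructor
      · rw [← he (Sum.inr w) y, ← he y (Sum.inl w)]
        cases y <;> simp [OGraph.antiTwin]
      · rw [← he y (Sum.inr w), ← he (Sum.inl w) y]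
        cases y <;> simp [OGraph.antiTwin]
  · rintro ⟨V1, V2, f, hunion, hdisj, ⟨hmaps, hinj, hsurj⟩, hN⟩
    refine ⟨V1, ⟨fun u v => S.arc u v, fun u v h => S.asymm u v h⟩, ?_, ?_⟩
    · refine Equiv.ofBijective (Sum.elim Subtype.val (fun u => f u.val)) ⟨?_, ?_⟩
      · rintro (⟨u, hu⟩ | ⟨u, hu⟩) (⟨v, hv⟩ | ⟨v, hv⟩) h <;>
          simp only [Sum.elim_inl, Sum.elim_inr] at h
        · simp [h]
        · exact absurd (h ▸ hmaps hv) (Set.disjoint_left.mp hdisj hu)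
        · exact absurd (h ▸ hmaps hu) fun hh => Set.disjoint_left.mp hdisj hv hh
        · simp [hinj hu hv h]
      · intro v
        have : v ∈ V1 ∪ V2 := hunion ▸ Set.mem_univ v
        rcases this with hv | hv
        · exact ⟨Sum.inl ⟨v, hv⟩, rfl⟩
        · obtain ⟨u, hu, huv⟩ := hsurj hv
          exact ⟨Sum.inr ⟨u, hu⟩, huv⟩
    · rintro (⟨u, hu⟩ | ⟨u, hu⟩) (⟨v, hv⟩ | ⟨v, hv⟩) <;>
        simp only [OGraph.antiTwin, Equiv.ofBijective, Equiv.coe_fn_mk, Sum.elim_inl, Sum.elim_inr]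
      · exact ((hN v hv u).2).symm
      · exact ((hN u hu v).1).symm
      · rw [(hN u hu (f v)).1, (hN v hv u).1]
end

section
/- If two vertices x and y of an oriented graph have at least one common neighbor on which they agree and at least one common neighbor on which they disagree (i.e., min(|A_{x,y}|,|D_{x,y}|) ≥ 1), then under any homomorphism of any push-presentation of the graph to an oriented graph, x and y must have distinct images. -/
/-- `x` and `y` agree on `z`: `z` is a common out-neighbor or common in-neighbor. -/
def Agree {V : Type} (G : OGraph V) (x y z : V) : Prop :=
  (G.arc x z ∧ G.arc y z) ∨ (G.arc z x ∧ G.arc z y)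

/-- `x` and `y` disagree on `z`. -/
def Disagree {V : Type} (G : OGraph V) (x y z : V) : Prop :=
  (G.arc x z ∧ G.arc z y) ∨ (G.arc z x ∧ G.arc y z)

lemma push_arc_iff {V : Type} (G : OGraph V) (S : Set V) (u v : V) :
    (G.push S).arc u v ↔
      ((Xor' (u ∈ S) (v ∈ S)) ∧ G.arc v u) ∨ (¬ Xor' (u ∈ S) (v ∈ S) ∧ G.arc u v) :=
  Iff.rfl

/-- If `x` and `y` have a common neighbor on which they agree and one on
which they disagree, then no homomorphism of any push-presentation of the graph to any
oriented graph identifies `x` and `y`. -/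
theorem agree_disagree_forces_distinct_images {V : Type} (G : OGraph V) (x y : V)
    (ha : ∃ z, Agree G x y z) (hd : ∃ z, Disagree G x y z) :
    ∀ (W : Type) (H : OGraph W) (S : Set V) (f : V → W),
      OGraph.IsHom (G.push S) H f → f x ≠ f y := by
  intro W H S f hf hxy
  obtain ⟨za, haz⟩ := ha
  obtain ⟨zd, hdz⟩ := hd
  have key : ∃ z, Disagree (G.push S) x y z := by
    by_cases hxs : x ∈ S <;> by_cases hys : y ∈ S
    · refine ⟨zd, ?_⟩
      unfold Disagree at hdz ⊢
      simp only [push_arc_iff, Xor']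
      by_cases hzs : zd ∈ S <;> simp only [hxs, hys, hzs] <;> tauto
    · refine ⟨za, ?_⟩
      unfold Agree at haz
      unfold Disagree
      simp only [push_arc_iff, Xor']
      by_cases hzs : za ∈ S <;> simp only [hxs, hys, hzs] <;> tauto
    · refine ⟨za, ?_⟩
      unfold Agree at haz
      unfold Disagree
      simp only [push_arc_iff, Xor']
      by_cases hzs : za ∈ S <;> simp only [hxs, hys, hzs] <;> tauto
    · refine ⟨zd, ?_⟩
      unfold Disagree at hdz ⊢
      simp only [push_arc_iff, Xor']
      by_cases hzs : zd ∈ S <;> simp only [hxs, hys, hzs] <;> tauto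
  obtain ⟨z, hz⟩ := key
  rcases hz with ⟨h1, h2⟩ | ⟨h1, h2⟩
  · have a1 := hf _ _ h1
    have a2 := hf _ _ h2
    rw [hxy] at a1
    exact H.asymm _ _ a1 a2
  · have a1 := hf _ _ h1
    have a2 := hf _ _ h2
    rw [← hxy] at a2
    exact H.asymm _ _ a1 a2
end
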